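/- The signed Wasserstein distance D_S satisfies the triangle inequality: D_S(s₁, s₃) ≤ D_S(s₁, s₂) + D_S(s₂, s₃) for signed integrable functions s₁, s₂, s₃ with finite second moments. -/

import Mathlib

open MeasureTheory

/-- Cumulative distribution function of a density. -/
noncomputable def cdf (f : ℝ → ℝ) (x : ℝ) : ℝ := ∫ t in Set.Iic x, f t

/-- Quantile function (generalized inverse of the CDF). -/
noncomputable def quant (f : ℝ → ℝ) : ℝ → ℝ := Function.invFun (cdf f)

/-- L¹ norm of a function on ℝ. -/
noncomputable def L1 (f : ℝ → ℝ) : ℝ := ∫ t, |f t|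

/-- Squared 2-Wasserstein distance between densities via quantile functions. -/
noncomputable def W2sq (p q : ℝ → ℝ) : ℝ :=
  ∫ u in Set.Ioo (0:ℝ) 1, (quant p u - quant q u) ^ 2

/-- `D_{W²}²(p,q) = W₂²(p/‖p‖₁, q/‖q‖₁) + (‖p‖₁ − ‖q‖₁)²`. -/
noncomputable def DW2sq (p q : ℝ → ℝ) : ℝ :=
  W2sq (fun t => p t / L1 p) (fun t => q t / L1 q) + (L1 p - L1 q) ^ 2

/-- Positive part. -/
noncomputable def sigPos' (f : ℝ → ℝ) : ℝ → ℝ := fun t => max (f t) 0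

/-- Negative part. -/
noncomputable def sigNeg' (f : ℝ → ℝ) : ℝ → ℝ := fun t => max (-f t) 0

/-- Squared signed Wasserstein distance. -/
noncomputable def DSsq (r s : ℝ → ℝ) : ℝ :=
  DW2sq (sigPos' r) (sigPos' s) + DW2sq (sigNeg' r) (sigNeg' s)

/-- Signed Wasserstein distance. -/
noncomputable def DS (r s : ℝ → ℝ) : ℝ := Real.sqrt (DSsq r s)

/-! ### Auxiliary lemmas about the CDF -/

theorem cdf_split (p : ℝ → ℝ) (hp : Integrable p) (x : ℝ) :
    cdf p x = cdf p 0 + ∫ t in (0:ℝ)..x, p t := by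
  unfold cdf
  rcases le_total 0 x with h | h
  · rw [intervalIntegral.integral_of_le h,
      ← setIntegral_union (Set.Iic_disjoint_Ioc le_rfl) measurableSet_Ioc hp.integrableOn
        hp.integrableOn,
      Set.Iic_union_Ioc_eq_Iic h]
  · rw [intervalIntegral.integral_of_ge h, eq_comm, add_neg_eq_iff_eq_add, eq_comm,
      ← setIntegral_union (Set.Iic_disjoint_Ioc le_rfl) measurableSet_Ioc hp.integrableOn
        hp.integrableOn,
      Set.Iic_union_Ioc_eq_Iic h]

theorem cdf_cont (p : ℝ → ℝ) (hp : Integrable p) : Continuous (cdf p) := by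
  have : cdf p = fun x => cdf p 0 + ∫ t in (0:ℝ)..x, p t := funext (cdf_split p hp)
  rw [this]
  exact continuous_const.add (hp.continuous_primitive 0)

theorem cdf_bot (p : ℝ → ℝ) (hp : Integrable p) :
    Filter.Tendsto (cdf p) Filter.atBot (nhds 0) := by
  have h0 : (0:ℝ) = ∫ t : ℝ, (0:ℝ) := by simp
  rw [h0]
  have : cdf p = fun x => ∫ t, Set.indicator (Set.Iic x) p t := by
    funext x; rw [integral_indicator measurableSet_Iic]; rfl
  rw [this]
  apply tendsto_integral_filter_of_dominated_convergence (fun t => |p t|)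
  · exact Filter.Eventually.of_forall fun x =>
      hp.aestronglyMeasurable.indicator measurableSet_Iic
  · exact Filter.Eventually.of_forall fun x => Filter.Eventually.of_forall fun t => by
      simpa using norm_indicator_le_norm_self p t
  · exact hp.abs
  · refine Filter.Eventually.of_forall fun t => ?_
    have : ∀ᶠ x in Filter.atBot, Set.indicator (Set.Iic x) p t = 0 := by
      filter_upwards [Filter.eventually_lt_atBot t] with x hx
      exact Set.indicator_of_notMem (by simpa using hx.not_ge) p
    exact Filter.Tendsto.congr' (this.mono fun x hx => hx.symm) tendsto_const_nhds

theorem cdf_top (p : ℝ → ℝ) (hp : Integrable p) :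
    Filter.Tendsto (cdf p) Filter.atTop (nhds (∫ t, p t)) := by
  have : cdf p = fun x => ∫ t, Set.indicator (Set.Iic x) p t := by
    funext x; rw [integral_indicator measurableSet_Iic]; rfl
  rw [this]
  apply tendsto_integral_filter_of_dominated_convergence (fun t => |p t|)
  · exact Filter.Eventually.of_forall fun x =>
      hp.aestronglyMeasurable.indicator measurableSet_Iic
  · exact Filter.Eventually.of_forall fun x => Filter.Eventually.of_forall fun t => by
      simpa using norm_indicator_le_norm_self p t
  · exact hp.abs
  · refine Filter.Eventually.of_forall fun t => ?_
    have : ∀ᶠ x in Filter.atTop, Set.indicator (Set.Iic x) p t = p t := by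
      filter_upwards [Filter.eventually_ge_atTop t] with x hx
      exact Set.indicator_of_mem (by simpa using hx) p
    exact Filter.Tendsto.congr' (this.mono fun x hx => hx.symm) tendsto_const_nhds

section
variable (p : ℝ → ℝ) (hp : Integrable p) (hnn : ∀ t, 0 ≤ p t)

include hp hnn in
theorem cdf_mono : Monotone (cdf p) := fun x y hxy =>
  setIntegral_mono_set hp.integrableOn (Filter.Eventually.of_forall hnn)
    (HasSubset.Subset.eventuallyLE (Set.Iic_subset_Iic.2 hxy))

theorem cdf_surj (hcont : Continuous (cdf p))
    (hbot : Filter.Tendsto (cdf p) Filter.atBot (nhds 0))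
    (htop : Filter.Tendsto (cdf p) Filter.atTop (nhds (∫ t, p t)))
    (u : ℝ) (h0 : 0 < u) (h1 : u < ∫ t, p t) : ∃ x, cdf p x = u := by
  obtain ⟨a, ha⟩ := (hbot.eventually_lt_const h0).exists
  obtain ⟨b, hb⟩ := (htop.eventually_const_lt h1).exists
  obtain ⟨x, hx⟩ := intermediate_value_univ a b hcont ⟨ha.le, hb.le⟩
  exact ⟨x, hx⟩

theorem quant_cdf {u : ℝ} (h : ∃ x, cdf p x = u) : cdf p (quant p u) = u :=
  Function.invFun_eq h

include hp hnn in
theorem quant_monoOn (S : Set ℝ) (hS : ∀ u ∈ S, ∃ x, cdf p x = u) :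
    MonotoneOn (quant p) S := by
  intro u hu v hv huv
  by_contra hlt
  push_neg at hlt
  have h1 : cdf p (quant p v) ≤ cdf p (quant p u) := cdf_mono p hp hnn hlt.le
  rw [quant_cdf p (hS u hu), quant_cdf p (hS v hv)] at h1
  have : u = v := le_antisymm huv h1
  subst this
  exact lt_irrefl _ hlt

include hp hnn in
theorem quant_preimage (hS : ∀ u ∈ Set.Ioo (0:ℝ) 1, ∃ x, cdf p x = u)
    (hle1 : ∀ x, cdf p x ≤ 1) (x : ℝ) :
    volume (quant p ⁻¹' (Set.Iic x) ∩ Set.Ioo (0:ℝ) 1) = ENNReal.ofReal (cdf p x) := by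
  set c := cdf p x with hc
  apply le_antisymm
  · calc volume (quant p ⁻¹' (Set.Iic x) ∩ Set.Ioo (0:ℝ) 1)
        ≤ volume (Set.Ioc (0:ℝ) c) := by
          apply measure_mono
          rintro u ⟨hux, hu0, hu1⟩
          have : cdf p (quant p u) ≤ c := cdf_mono p hp hnn hux
          rw [quant_cdf p (hS u ⟨hu0, hu1⟩)] at this
          exact ⟨hu0, this⟩
      _ = ENNReal.ofReal c := by simp
  · calc ENNReal.ofReal c = volume (Set.Ioo (0:ℝ) c) := by simp
      _ ≤ volume (quant p ⁻¹' (Set.Iic x) ∩ Set.Ioo (0:ℝ) 1) := by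
          apply measure_mono
          rintro u ⟨hu0, huc⟩
          have hu1 : u < 1 := lt_of_lt_of_le huc (hle1 x)
          refine ⟨?_, hu0, hu1⟩
          simp only [Set.mem_preimage, Set.mem_Iic]
          by_contra hgt
          push_neg at hgt
          have : c ≤ cdf p (quant p u) := cdf_mono p hp hnn hgt.le
          rw [quant_cdf p (hS u ⟨hu0, hu1⟩)] at this
          exact absurd this (not_le.2 huc)
end

section
variable {p : ℝ → ℝ} (hp : Integrable p) (hnn : ∀ t, 0 ≤ p t)

include hp hnn in
theorem map_quant (hS : ∀ u ∈ Set.Ioo (0:ℝ) 1, ∃ x, cdf p x = u)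
    (hle1 : ∀ x, cdf p x ≤ 1) :
    Measure.map (quant p) (volume.restrict (Set.Ioo (0:ℝ) 1))
      = volume.withDensity (fun x => ENNReal.ofReal (p x)) := by
  have hm : AEMeasurable (quant p) (volume.restrict (Set.Ioo (0:ℝ) 1)) :=
    aemeasurable_restrict_of_monotoneOn measurableSet_Ioo
      (quant_monoOn p hp hnn _ hS)
  have hfin1 : IsFiniteMeasure (Measure.map (quant p) (volume.restrict (Set.Ioo (0:ℝ) 1))) := by
    constructor
    rw [Measure.map_apply_of_aemeasurable hm MeasurableSet.univ]
    simp [Real.volume_Ioo]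
  refine @Measure.ext_of_Iic ℝ _ _ _ _ _ _ _ _ hfin1 fun x => ?_
  rw [Measure.map_apply_of_aemeasurable hm measurableSet_Iic,
    Measure.restrict_apply' measurableSet_Ioo,
    quant_preimage p hp hnn hS hle1 x,
    withDensity_apply _ measurableSet_Iic,
    ← ofReal_integral_eq_lintegral_ofReal hp.integrableOn
      (Filter.Eventually.of_forall fun t => hnn t)]
  rfl

include hp hnn in
theorem memLp_quant_aux (hp2 : Integrable (fun t => p t * t ^ 2))
    (hS : ∀ u ∈ Set.Ioo (0:ℝ) 1, ∃ x, cdf p x = u)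
    (hle1 : ∀ x, cdf p x ≤ 1) :
    MemLp (quant p) 2 (volume.restrict (Set.Ioo (0:ℝ) 1)) := by
  have hm : AEMeasurable (quant p) (volume.restrict (Set.Ioo (0:ℝ) 1)) :=
    aemeasurable_restrict_of_monotoneOn measurableSet_Ioo (quant_monoOn p hp hnn _ hS)
  rw [memLp_two_iff_integrable_sq hm.aestronglyMeasurable]
  refine ⟨(hm.pow_const 2).aestronglyMeasurable, ?_⟩
  rw [hasFiniteIntegral_iff_ofReal (Filter.Eventually.of_forall fun u => sq_nonneg _)]
  have hsq : Measurable (fun x : ℝ => ENNReal.ofReal (x ^ 2)) :=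
    ENNReal.measurable_ofReal.comp (measurable_id.pow_const 2)
  have key : ∫⁻ u in Set.Ioo (0:ℝ) 1, ENNReal.ofReal (quant p u ^ 2)
      = ∫⁻ x, ENNReal.ofReal (x ^ 2)
          ∂(Measure.map (quant p) (volume.restrict (Set.Ioo (0:ℝ) 1))) := by
    rw [lintegral_map' hsq.aemeasurable hm]
  rw [key, map_quant hp hnn hS hle1,
    lintegral_withDensity_eq_lintegral_mul₀ hp.aemeasurable.ennreal_ofReal hsq.aemeasurable]
  have : ∀ x : ℝ, ((fun x => ENNReal.ofReal (p x)) * fun x => ENNReal.ofReal (x ^ 2)) x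
      = ENNReal.ofReal (p x * x ^ 2) := fun x => by
    simp [ENNReal.ofReal_mul (hnn x)]
  rw [lintegral_congr this,
    ← ofReal_integral_eq_lintegral_ofReal hp2
      (Filter.Eventually.of_forall fun t => mul_nonneg (hnn t) (sq_nonneg t))]
  exact ENNReal.ofReal_lt_top
end

/-- Main building block: the quantile function of the normalized density is in L². -/
theorem memLp_quant {p : ℝ → ℝ} (hp : Integrable p) (hnn : ∀ t, 0 ≤ p t)
    (hp2 : Integrable (fun t => p t * t ^ 2)) :
    MemLp (quant (fun t => p t / L1 p)) 2 (volume.restrict (Set.Ioo (0:ℝ) 1)) := by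
  set c := L1 p with hc
  by_cases hc0 : c = 0
  · -- degenerate case: the normalized density is identically zero
    have hq0 : ∀ t, p t / c = 0 := fun t => by rw [hc0, div_zero]
    have hcdf : ∀ x, cdf (fun t => p t / L1 p) x = 0 := by
      intro x
      have : (fun t => p t / L1 p) = fun _ => (0:ℝ) := funext hq0
      rw [cdf, this]
      simp
    have hconst : ∀ u ∈ Set.Ioo (0:ℝ) 1,
        quant (fun t => p t / L1 p) u = Classical.arbitrary ℝ := by
      intro u hu
      have : ¬ ∃ x, cdf (fun t => p t / L1 p) x = u := by
        rintro ⟨x, hx⟩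
        rw [hcdf x] at hx
        exact hu.1.ne hx
      simp only [quant, Function.invFun, dif_neg this]
    refine (memLp_const (Classical.arbitrary ℝ)).ae_eq ?_
    filter_upwards [ae_restrict_mem measurableSet_Ioo] with u hu
    exact (hconst u hu).symm
  · have hcpos : 0 < c := lt_of_le_of_ne (integral_nonneg fun t => abs_nonneg _) (Ne.symm hc0)
    set q := fun t => p t / L1 p with hqdef
    have hq : Integrable q := hp.div_const _
    have hqnn : ∀ t, 0 ≤ q t := fun t => div_nonneg (hnn t) (le_of_lt (hc ▸ hcpos))
    have hq2 : Integrable (fun t => q t * t ^ 2) := by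
      refine (hp2.div_const c).congr (Filter.Eventually.of_forall fun t => ?_)
      show p t * t ^ 2 / c = q t * t ^ 2
      rw [hqdef]; dsimp only; rw [← hc]; ring
    have hint : ∫ t, q t = 1 := by
      have habs : (∫ t, p t) = L1 p := by
        rw [L1]
        exact (integral_congr_ae
          (Filter.Eventually.of_forall fun t => abs_of_nonneg (hnn t))).symm
      show (∫ t, p t / L1 p) = 1
      rw [integral_div, habs]
      exact div_self (hc ▸ hc0)
    have hle1 : ∀ x, cdf q x ≤ 1 := by
      intro x
      rw [← hint]
      exact setIntegral_le_integral hq (Filter.Eventually.of_forall hqnn)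
    have hS : ∀ u ∈ Set.Ioo (0:ℝ) 1, ∃ x, cdf q x = u := fun u hu =>
      cdf_surj q (cdf_cont q hq) (cdf_bot q hq) (cdf_top q hq) u hu.1 (hint ▸ hu.2)
    exact memLp_quant_aux hq hqnn hq2 hS hle1

/-! ### L² triangle inequality -/

theorem sqrt_integral_sq_eq {μ : Measure ℝ} {a : ℝ → ℝ} (ha : MemLp a 2 μ) :
    Real.sqrt (∫ u, a u ^ 2 ∂μ) = ‖ha.toLp a‖ := by
  have h1 : ∫ u, a u ^ 2 ∂μ = ∫ u, (ha.toLp a : ℝ → ℝ) u ^ 2 ∂μ :=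
    integral_congr_ae ((ha.coeFn_toLp).mono fun u hu => by dsimp only; rw [hu])
  have h2 : ∫ u, (ha.toLp a : ℝ → ℝ) u ^ 2 ∂μ = ‖ha.toLp a‖ ^ 2 := by
    rw [← real_inner_self_eq_norm_sq, L2.inner_def]
    congr 1
    ext u
    simp [real_inner_self_eq_norm_sq, sq_abs]
  rw [h1, h2, Real.sqrt_sq (norm_nonneg _)]

theorem L2_triangle {μ : Measure ℝ} {f g h : ℝ → ℝ}
    (hf : MemLp f 2 μ) (hg : MemLp g 2 μ) (hh : MemLp h 2 μ) :
    Real.sqrt (∫ u, (f u - h u) ^ 2 ∂μ)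
      ≤ Real.sqrt (∫ u, (f u - g u) ^ 2 ∂μ) + Real.sqrt (∫ u, (g u - h u) ^ 2 ∂μ) := by
  have hfg := hf.sub hg
  have hgh := hg.sub hh
  have hfh := hf.sub hh
  have e1 := sqrt_integral_sq_eq hfh
  have e2 := sqrt_integral_sq_eq hfg
  have e3 := sqrt_integral_sq_eq hgh
  simp only [Pi.sub_apply] at e1 e2 e3
  rw [e1, e2, e3]
  have key : hfh.toLp (f - h) = hfg.toLp (f - g) + hgh.toLp (g - h) := by
    rw [← MemLp.toLp_add]
    exact MemLp.toLp_congr _ _ (Filter.Eventually.of_forall fun u => by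
      simp only [Pi.sub_apply, Pi.add_apply]; ring)
  rw [key]
  exact norm_add_le _ _

/-! ### Finite-dimensional Minkowski glue -/

theorem minkowski4 {A B C D a₁ a₂ b₁ b₂ c₁ c₂ d₁ d₂ : ℝ}
    (hA : 0 ≤ A) (hB : 0 ≤ B) (hC : 0 ≤ C) (hD : 0 ≤ D)
    (hAb : Real.sqrt A ≤ a₁ + a₂) (hBb : Real.sqrt B ≤ b₁ + b₂)
    (hCb : Real.sqrt C ≤ c₁ + c₂) (hDb : Real.sqrt D ≤ d₁ + d₂) :
    Real.sqrt (A + B + C + D)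
      ≤ Real.sqrt (a₁ ^ 2 + b₁ ^ 2 + c₁ ^ 2 + d₁ ^ 2)
        + Real.sqrt (a₂ ^ 2 + b₂ ^ 2 + c₂ ^ 2 + d₂ ^ 2) := by
  have h1 : A ≤ (a₁ + a₂) ^ 2 := by nlinarith [Real.sq_sqrt hA, Real.sqrt_nonneg A]
  have h2 : B ≤ (b₁ + b₂) ^ 2 := by nlinarith [Real.sq_sqrt hB, Real.sqrt_nonneg B]
  have h3 : C ≤ (c₁ + c₂) ^ 2 := by nlinarith [Real.sq_sqrt hC, Real.sqrt_nonneg C]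
  have h4 : D ≤ (d₁ + d₂) ^ 2 := by nlinarith [Real.sq_sqrt hD, Real.sqrt_nonneg D]
  have step1 : Real.sqrt (A + B + C + D)
      ≤ Real.sqrt ((a₁ + a₂) ^ 2 + (b₁ + b₂) ^ 2 + (c₁ + c₂) ^ 2 + (d₁ + d₂) ^ 2) :=
    Real.sqrt_le_sqrt (by linarith)
  refine step1.trans ?_
  have mink := norm_add_le (E := EuclideanSpace ℝ (Fin 4))
    (WithLp.toLp 2 ![a₁, b₁, c₁, d₁] : EuclideanSpace ℝ (Fin 4)) (WithLp.toLp 2 ![a₂, b₂, c₂, d₂])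
  simp only [EuclideanSpace.norm_eq, Fin.sum_univ_four, Real.norm_eq_abs, sq_abs] at mink
  have hadd : ∀ i : Fin 4, (WithLp.toLp 2 ![a₁, b₁, c₁, d₁] + WithLp.toLp 2 ![a₂, b₂, c₂, d₂] : EuclideanSpace ℝ (Fin 4)) i
      = ![a₁, b₁, c₁, d₁] i + ![a₂, b₂, c₂, d₂] i := fun i => rfl
  simp only [hadd] at mink
  simpa [Matrix.cons_val_zero, Matrix.cons_val_one, Matrix.head_cons] using mink

/-! ### Positive/negative parts -/

theorem second_moment_aux {s q : ℝ → ℝ} (hs2 : Integrable (fun t => s t * |t| ^ 2))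
    (hqm : AEStronglyMeasurable q volume) (hb : ∀ t, |q t| ≤ |s t|) :
    Integrable (fun t => q t * t ^ 2) := by
  refine Integrable.mono' hs2.abs
    (hqm.mul ((measurable_id.pow_const 2).aestronglyMeasurable)) ?_
  refine Filter.Eventually.of_forall fun t => ?_
  rw [Real.norm_eq_abs, abs_mul]
  calc |q t| * |t ^ 2| ≤ |s t| * |t ^ 2| :=
        mul_le_mul_of_nonneg_right (hb t) (abs_nonneg _)
    _ = |s t * |t| ^ 2| := by
        rw [abs_mul, abs_pow, abs_pow, abs_abs]

theorem memLp_quant_pos {s : ℝ → ℝ} (hs : Integrable s)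
    (hs2 : Integrable (fun t => s t * |t| ^ 2)) :
    MemLp (quant (fun t => sigPos' s t / L1 (sigPos' s))) 2
      (volume.restrict (Set.Ioo (0:ℝ) 1)) := by
  refine memLp_quant hs.pos_part (fun t => le_max_right _ _) ?_
  refine second_moment_aux hs2 hs.pos_part.aestronglyMeasurable fun t => ?_
  rw [abs_of_nonneg (le_max_right _ _)]
  exact max_le (le_abs_self _) (abs_nonneg _)

theorem memLp_quant_neg {s : ℝ → ℝ} (hs : Integrable s)
    (hs2 : Integrable (fun t => s t * |t| ^ 2)) :
    MemLp (quant (fun t => sigNeg' s t / L1 (sigNeg' s))) 2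
      (volume.restrict (Set.Ioo (0:ℝ) 1)) := by
  refine memLp_quant hs.neg_part (fun t => le_max_right _ _) ?_
  refine second_moment_aux hs2 hs.neg_part.aestronglyMeasurable fun t => ?_
  rw [abs_of_nonneg (le_max_right _ _)]
  exact max_le (neg_le_abs _) (abs_nonneg _)

/-- Triangle inequality for the signed Wasserstein distance. -/
theorem DS_triangle (s₁ s₂ s₃ : ℝ → ℝ)
    (h₁ : Integrable s₁) (h₂ : Integrable s₂) (h₃ : Integrable s₃)
    (h₁2 : Integrable (fun t => s₁ t * |t| ^ 2))
    (h₂2 : Integrable (fun t => s₂ t * |t| ^ 2))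
    (h₃2 : Integrable (fun t => s₃ t * |t| ^ 2)) :
    DS s₁ s₃ ≤ DS s₁ s₂ + DS s₂ s₃ := by
  have mp₁ := memLp_quant_pos h₁ h₁2
  have mp₂ := memLp_quant_pos h₂ h₂2
  have mp₃ := memLp_quant_pos h₃ h₃2
  have mn₁ := memLp_quant_neg h₁ h₁2
  have mn₂ := memLp_quant_neg h₂ h₂2
  have mn₃ := memLp_quant_neg h₃ h₃2
  have tpos := L2_triangle mp₁ mp₂ mp₃
  have tneg := L2_triangle mn₁ mn₂ mn₃
  have npos : |L1 (sigPos' s₁) - L1 (sigPos' s₃)|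
      ≤ |L1 (sigPos' s₁) - L1 (sigPos' s₂)| + |L1 (sigPos' s₂) - L1 (sigPos' s₃)| :=
    abs_sub_le _ _ _
  have nneg : |L1 (sigNeg' s₁) - L1 (sigNeg' s₃)|
      ≤ |L1 (sigNeg' s₁) - L1 (sigNeg' s₂)| + |L1 (sigNeg' s₂) - L1 (sigNeg' s₃)| :=
    abs_sub_le _ _ _
  -- abbreviations
  set W13p := W2sq (fun t => sigPos' s₁ t / L1 (sigPos' s₁)) (fun t => sigPos' s₃ t / L1 (sigPos' s₃))
  set W12p := W2sq (fun t => sigPos' s₁ t / L1 (sigPos' s₁)) (fun t => sigPos' s₂ t / L1 (sigPos' s₂))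
  set W23p := W2sq (fun t => sigPos' s₂ t / L1 (sigPos' s₂)) (fun t => sigPos' s₃ t / L1 (sigPos' s₃))
  set W13n := W2sq (fun t => sigNeg' s₁ t / L1 (sigNeg' s₁)) (fun t => sigNeg' s₃ t / L1 (sigNeg' s₃))
  set W12n := W2sq (fun t => sigNeg' s₁ t / L1 (sigNeg' s₁)) (fun t => sigNeg' s₂ t / L1 (sigNeg' s₂))
  set W23n := W2sq (fun t => sigNeg' s₂ t / L1 (sigNeg' s₂)) (fun t => sigNeg' s₃ t / L1 (sigNeg' s₃))
  have hW13p : 0 ≤ W13p := integral_nonneg fun u => sq_nonneg _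
  have hW12p : 0 ≤ W12p := integral_nonneg fun u => sq_nonneg _
  have hW23p : 0 ≤ W23p := integral_nonneg fun u => sq_nonneg _
  have hW13n : 0 ≤ W13n := integral_nonneg fun u => sq_nonneg _
  have hW12n : 0 ≤ W12n := integral_nonneg fun u => sq_nonneg _
  have hW23n : 0 ≤ W23n := integral_nonneg fun u => sq_nonneg _
  have hAb : Real.sqrt W13p ≤ Real.sqrt W12p + Real.sqrt W23p := tpos
  have hCb : Real.sqrt W13n ≤ Real.sqrt W12n + Real.sqrt W23n := tneg
  have hBb : Real.sqrt ((L1 (sigPos' s₁) - L1 (sigPos' s₃)) ^ 2)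
      ≤ |L1 (sigPos' s₁) - L1 (sigPos' s₂)| + |L1 (sigPos' s₂) - L1 (sigPos' s₃)| := by
    rw [Real.sqrt_sq_eq_abs]; exact npos
  have hDb : Real.sqrt ((L1 (sigNeg' s₁) - L1 (sigNeg' s₃)) ^ 2)
      ≤ |L1 (sigNeg' s₁) - L1 (sigNeg' s₂)| + |L1 (sigNeg' s₂) - L1 (sigNeg' s₃)| := by
    rw [Real.sqrt_sq_eq_abs]; exact nneg
  have main := minkowski4 hW13p (sq_nonneg (L1 (sigPos' s₁) - L1 (sigPos' s₃)))
    hW13n (sq_nonneg (L1 (sigNeg' s₁) - L1 (sigNeg' s₃)))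
    hAb hBb hCb hDb
  have e12 : Real.sqrt W12p ^ 2 + |L1 (sigPos' s₁) - L1 (sigPos' s₂)| ^ 2
      + Real.sqrt W12n ^ 2 + |L1 (sigNeg' s₁) - L1 (sigNeg' s₂)| ^ 2 = DSsq s₁ s₂ := by
    rw [Real.sq_sqrt hW12p, Real.sq_sqrt hW12n, sq_abs, sq_abs]
    unfold DSsq DW2sq
    ring
  have e23 : Real.sqrt W23p ^ 2 + |L1 (sigPos' s₂) - L1 (sigPos' s₃)| ^ 2
      + Real.sqrt W23n ^ 2 + |L1 (sigNeg' s₂) - L1 (sigNeg' s₃)| ^ 2 = DSsq s₂ s₃ := by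
    rw [Real.sq_sqrt hW23p, Real.sq_sqrt hW23n, sq_abs, sq_abs]
    unfold DSsq DW2sq
    ring
  have e13 : W13p + (L1 (sigPos' s₁) - L1 (sigPos' s₃)) ^ 2
      + W13n + (L1 (sigNeg' s₁) - L1 (sigNeg' s₃)) ^ 2 = DSsq s₁ s₃ := by
    unfold DSsq DW2sq
    ring
  rw [e12, e23, e13] at main
  exact main
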